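/- Let TS be a semantic labeled transition system with total transition relation, fix a k-safety specification φ̂ given by ψ, (ξ i), φ, and let 𝒜 be a valid arbiter for TS and φ̂. Then TS ⊨ φ̂ if and only if every composed state s̄ that is ψ-reachable in the composed transition system TS^k_𝒜 satisfies ¬ Bad(s̄). -/

import Mathlib

/-- A semantic labeled transition system with a total transition relation. -/
structure LTS (S L : Type*) where
  Init : Set S
  Tr : S → L → S → Prop
  total : ∀ s, ∃ ℓ s', Tr s ℓ s'

/-- `t` is a trace of `T` starting from `s`. -/
def LTS.IsTrace {S L : Type*} (T : LTS S L) (t : ℕ → S) (s : S) : Prop :=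
  t 0 = s ∧ ∀ n, ∃ ℓ, T.Tr (t n) ℓ (t (n + 1))

/-- The trace `t` has at least `j + 1` observation points with respect to `ξ`. -/
def HasObsUpTo {S : Type*} (ξ : S → Prop) (t : ℕ → S) (j : ℕ) : Prop :=
  ∃ f : Fin (j + 1) → ℕ, StrictMono f ∧ ∀ i, ξ (t (f i))

/-- The `j`-th observation state of the trace `t` with respect to `ξ`:
`t n_j` where `n_j` is the `j`-th smallest element of `{n | ξ (t n)}`. -/
noncomputable def obsState {S : Type*} (ξ : S → Prop) (t : ℕ → S) (j : ℕ) : S :=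
  t (Nat.nth (fun n => ξ (t n)) j)

/-- `TS ⊨ φ̂` for the `k`-safety specification given by `ψ`, `ξ`, `φ`. -/
def kSafetyModels {S L : Type*} (T : LTS S L) {k : ℕ} (ψ : (Fin k → S) → Prop)
    (ξ : Fin k → S → Prop) (φ : (Fin k → S) → Prop) : Prop :=
  ∀ sb : Fin k → S, (∀ i, sb i ∈ T.Init) → ψ sb →
    ∀ t : Fin k → ℕ → S, (∀ i, T.IsTrace (t i) (sb i)) →
      ∀ j : ℕ, (∀ i, HasObsUpTo (ξ i) (t i) j) →
        φ (fun i => obsState (ξ i) (t i) j)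

/-- `s̄ ↝[M,ℓ̄] s̄'`: the composed step with schedule `M` and labels `ℓ̄`. -/
def ComposedStep {S L : Type*} (T : LTS S L) {k : ℕ} (M : Set (Fin k)) (ℓ : Fin k → L)
    (sb sb' : Fin k → S) : Prop :=
  (∀ i ∈ M, T.Tr (sb i) (ℓ i) (sb' i)) ∧ ∀ i ∉ M, sb' i = sb i

/-- `M` is a valid schedule for the composed state `s̄`. -/
def ValidSched {S : Type*} {k : ℕ} (ξ : Fin k → S → Prop) (M : Set (Fin k))
    (sb : Fin k → S) : Prop :=
  (∀ i ∈ M, ¬ ξ i (sb i)) ∨ (M = Set.univ ∧ ∀ i, ξ i (sb i))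

/-- `Bad s̄`: all traces are at observation points but `φ` fails. -/
def BadState {S : Type*} {k : ℕ} (ξ : Fin k → S → Prop) (φ : (Fin k → S) → Prop)
    (sb : Fin k → S) : Prop :=
  (∀ i, ξ i (sb i)) ∧ ¬ φ sb

/-- A schedule: a nonempty subset of `Fin k`. -/
def Sched (k : ℕ) := {M : Set (Fin k) // M.Nonempty}

/-- The transition relation of the composed transition system `TS^k_𝒜`. -/
def CompTrans {S L : Type*} (T : LTS S L) {k : ℕ}
    (Arb : (Fin k → S) → Set (Sched k)) (sb sb' : Fin k → S) : Prop :=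
  ∃ M ∈ Arb sb, ∃ ℓ, ComposedStep T M.val ℓ sb sb'

/-- `s̄` is ψ-reachable in the composed transition system `TS^k_𝒜`. -/
def PsiReachable {S L : Type*} (T : LTS S L) {k : ℕ} (ψ : (Fin k → S) → Prop)
    (Arb : (Fin k → S) → Set (Sched k)) (sb : Fin k → S) : Prop :=
  ∃ sb0, (∀ i, sb0 i ∈ T.Init) ∧ ψ sb0 ∧ Relation.ReflTransGen (CompTrans T Arb) sb0 sb

/-- The arbiter `𝒜` is valid for `TS` and `φ̂`. -/
def ValidArbiter {S L : Type*} (T : LTS S L) {k : ℕ} (ψ : (Fin k → S) → Prop)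
    (ξ : Fin k → S → Prop) (Arb : (Fin k → S) → Set (Sched k)) : Prop :=
  ∀ sb, PsiReachable T ψ Arb sb →
    (Arb sb).Nonempty ∧ ∀ M ∈ Arb sb, ValidSched ξ M.val sb

/-- Extend a state into an infinite trace using totality of the transition relation. -/
noncomputable def LTS.ext {S L : Type*} (T : LTS S L) (s : S) : ℕ → S
  | 0 => s
  | n + 1 => (T.total (T.ext s n)).choose_spec.choose

lemma LTS.ext_step {S L : Type*} (T : LTS S L) (s : S) (n : ℕ) :
    ∃ ℓ, T.Tr (T.ext s n) ℓ (T.ext s (n + 1)) :=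
  ⟨(T.total (T.ext s n)).choose, (T.total (T.ext s n)).choose_spec.choose_spec⟩

lemma count_congr_aux {p q : ℕ → Prop} [DecidablePred p] [DecidablePred q] (n : ℕ)
    (h : ∀ m < n, (p m ↔ q m)) : Nat.count p n = Nat.count q n := by
  induction n with
  | zero => simp
  | succ n ih =>
    rw [Nat.count_succ, Nat.count_succ,
      ih (fun m hm => h m (hm.trans (Nat.lt_succ_self n)))]
    congr 1
    exact if_congr (h n (Nat.lt_succ_self n)) rfl rfl

theorem kSafety_iff_composed_safe {S L : Type*} (T : LTS S L) {k : ℕ} (hk : 1 ≤ k)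
    (ψ : (Fin k → S) → Prop) (ξ : Fin k → S → Prop) (φ : (Fin k → S) → Prop)
    (Arb : (Fin k → S) → Set (Sched k)) (hArb : ValidArbiter T ψ ξ Arb) :
    kSafetyModels T ψ ξ φ ↔
      ∀ sb, PsiReachable T ψ Arb sb → ¬ BadState ξ φ sb := by
  classical
  constructor
  · -- soundness: TS ⊨ φ̂ implies no reachable bad state
    intro hmodel sb hreach hbad
    obtain ⟨sb0, hinit, hpsi, hrtg⟩ := hreach
    have key : ∀ sb', Relation.ReflTransGen (CompTrans T Arb) sb0 sb' →
        ∃ (u : Fin k → ℕ → S) (m : Fin k → ℕ) (c : ℕ),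
          (∀ i, u i 0 = sb0 i) ∧
          (∀ i, ∀ n < m i, ∃ ℓ, T.Tr (u i n) ℓ (u i (n + 1))) ∧
          (∀ i, u i (m i) = sb' i) ∧
          (∀ i, Nat.count (fun n => ξ i (u i n)) (m i) = c) := by
      intro sb' h
      induction h with
      | refl =>
        exact ⟨fun i _ => sb0 i, fun _ => 0, 0, fun i => rfl,
          fun i n hn => absurd hn (Nat.not_lt_zero n), fun i => rfl, fun i => by simp⟩
      | @tail b sb'' hb hstep ih =>
        obtain ⟨u, m, c, hu0, hustep, huend, hucount⟩ := ih
        obtain ⟨M, hM, ℓ, hTr, hFix⟩ := hstep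
        have hvalid := (hArb b ⟨sb0, hinit, hpsi, hb⟩).2 M hM
        have hstep' : ∀ i ∈ M.val, ∀ n < m i + 1,
            ∃ ℓ', T.Tr ((fun n => if n ≤ m i then u i n else sb'' i) n) ℓ'
              ((fun n => if n ≤ m i then u i n else sb'' i) (n + 1)) := by
          intro i hi n hn
          rcases Nat.lt_succ_iff_lt_or_eq.mp hn with h' | h'
          · simp only [if_pos (Nat.le_of_lt h'), if_pos (Nat.succ_le_of_lt h')]
            exact hustep i n h'
          · subst h'
            simp only [if_pos le_rfl, if_neg (by omega : ¬ m i + 1 ≤ m i)]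
            exact ⟨ℓ i, (huend i) ▸ hTr i hi⟩
        have hcnt' : ∀ i, Nat.count (fun n => ξ i (if n ≤ m i then u i n else sb'' i)) (m i)
            = c := by
          intro i
          rw [← hucount i]
          exact count_congr_aux (m i) (fun n hn => by rw [if_pos (Nat.le_of_lt hn)])
        rcases hvalid with hno | ⟨huniv, hall⟩
        · refine ⟨fun i n => if i ∈ M.val then (if n ≤ m i then u i n else sb'' i) else u i n,
            fun i => if i ∈ M.val then m i + 1 else m i, c, ?_, ?_, ?_, ?_⟩
          · intro i; by_cases hi : i ∈ M.val <;> simp [hi, hu0 i]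
          · intro i n hn
            by_cases hi : i ∈ M.val
            · simp only [hi, if_true] at hn ⊢
              exact hstep' i hi n hn
            · simp only [hi, if_false] at hn ⊢
              exact hustep i n hn
          · intro i; by_cases hi : i ∈ M.val
            · simp [hi]
            · simp [hi, huend i, hFix i hi]
          · intro i; by_cases hi : i ∈ M.val
            · simp only [hi, if_true]
              rw [Nat.count_succ, hcnt' i, if_neg, Nat.add_zero]
              simp only [if_pos le_rfl]
              rw [huend i]
              exact hno i hi
            · simp only [hi, if_false]
              exact hucount i
        · have hiM : ∀ i : Fin k, i ∈ M.val := fun i => huniv ▸ Set.mem_univ i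
          refine ⟨fun i n => if i ∈ M.val then (if n ≤ m i then u i n else sb'' i) else u i n,
            fun i => if i ∈ M.val then m i + 1 else m i, c + 1, ?_, ?_, ?_, ?_⟩
          · intro i; simp [hiM i, hu0 i]
          · intro i n hn
            simp only [hiM i, if_true] at hn ⊢
            exact hstep' i (hiM i) n hn
          · intro i; simp [hiM i]
          · intro i
            simp only [hiM i, if_true]
            rw [Nat.count_succ, hcnt' i, if_pos, ]
            simp only [if_pos le_rfl]
            rw [huend i]
            exact hall i
    obtain ⟨u, m, c, hu0, hustep, huend, hucount⟩ := key sb hrtg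
    set t : Fin k → ℕ → S := fun i n => if n < m i then u i n else T.ext (sb i) (n - m i)
      with htdef
    have htm : ∀ i, t i (m i) = sb i := by
      intro i; simp only [htdef, lt_irrefl, if_neg (lt_irrefl (m i)), Nat.sub_self]
      rfl
    have htlt : ∀ i, ∀ n < m i, t i n = u i n := by
      intro i n hn; simp [htdef, hn]
    have htr : ∀ i, T.IsTrace (t i) (sb0 i) := by
      intro i
      constructor
      · rcases Nat.eq_zero_or_pos (m i) with h | h
        · rw [← hu0 i, ← h, htm i, ← huend i]
        · rw [htlt i 0 h, hu0 i]
      · intro n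
        rcases Nat.lt_or_ge n (m i) with h | h
        · rcases Nat.lt_or_ge (n + 1) (m i) with h' | h'
          · rw [htlt i n h, htlt i (n + 1) h']
            exact hustep i n h
          · have h'' : n + 1 = m i := le_antisymm h h'
            rw [htlt i n h, h'', htm i, ← huend i]
            exact h'' ▸ hustep i n h
        · have e1 : t i n = T.ext (sb i) (n - m i) := by
            simp [htdef, Nat.not_lt.mpr h]
          have e2 : t i (n + 1) = T.ext (sb i) (n - m i + 1) := by
            have : ¬ n + 1 < m i := by omega
            simp only [htdef, if_neg this]
            congr 1
            omega
          rw [e1, e2]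
          exact T.ext_step (sb i) (n - m i)
    have hpmi : ∀ i, ξ i (t i (m i)) := fun i => (htm i) ▸ hbad.1 i
    have hcnt : ∀ i, Nat.count (fun n => ξ i (t i n)) (m i) = c := by
      intro i
      rw [← hucount i]
      exact count_congr_aux (m i) (fun n hn => by rw [htlt i n hn])
    have hnth : ∀ i, Nat.nth (fun n => ξ i (t i n)) c = m i := by
      intro i
      rw [← hcnt i]
      exact Nat.nth_count (hpmi i)
    have hcard : ∀ i, ∀ hf : (setOf fun n => ξ i (t i n)).Finite, c < hf.toFinset.card := by
      intro i hf
      rw [← hcnt i]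
      exact Nat.count_lt_card hf (hpmi i)
    have hobsc : ∀ i, HasObsUpTo (ξ i) (t i) c := by
      intro i
      refine ⟨fun r => Nat.nth (fun n => ξ i (t i n)) r, ?_, ?_⟩
      · intro a b hab
        exact Nat.nth_lt_nth' hab
          (fun hf => lt_of_le_of_lt (Nat.le_of_lt_succ b.isLt) (hcard i hf))
      · intro r
        exact Nat.nth_mem r
          (fun hf => lt_of_le_of_lt (Nat.le_of_lt_succ r.isLt) (hcard i hf))
    have hφ := hmodel sb0 hinit hpsi t htr c hobsc
    apply hbad.2
    have heq : (fun i => obsState (ξ i) (t i) c) = sb := by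
      funext i
      show t i (Nat.nth (fun n => ξ i (t i n)) c) = sb i
      rw [hnth i, htm i]
    rwa [heq] at hφ
  · -- completeness: no reachable bad state implies TS ⊨ φ̂
    intro hsafe sb0 hinit hpsi t ht j hobs
    set p : Fin k → ℕ → Prop := fun i n => ξ i (t i n) with hpdef
    have hcard : ∀ i (c : ℕ), c ≤ j →
        ∀ hf : (setOf (p i)).Finite, c < hf.toFinset.card := by
      intro i c hc hf
      obtain ⟨f, hmono, hfmem⟩ := hobs i
      have h1 : (Finset.univ : Finset (Fin (j + 1))).card ≤ hf.toFinset.card := by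
        apply Finset.card_le_card_of_injOn (fun r => f r)
        · intro r _
          simp only [Finset.mem_coe, Set.Finite.mem_toFinset, Set.mem_setOf_eq]
          exact hfmem r
        · intro a _ b _ hab
          exact hmono.injective hab
      simp only [Finset.card_univ, Fintype.card_fin] at h1
      omega
    have hmem : ∀ i (c : ℕ), c ≤ j → p i (Nat.nth (p i) c) := by
      intro i c hc
      exact Nat.nth_mem c (fun hf => hcard i c hc hf)
    have claimA : ∀ c ≤ j, ∀ d (q : Fin k → ℕ),
        (∑ i, (Nat.nth (p i) c - q i)) = d →
        (∀ i, q i ≤ Nat.nth (p i) c) →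
        (∀ i, ∀ n, q i ≤ n → n < Nat.nth (p i) c → ¬ p i n) →
        PsiReachable T ψ Arb (fun i => t i (q i)) →
        PsiReachable T ψ Arb (fun i => t i (Nat.nth (p i) c)) := by
      intro c hc d
      induction d using Nat.strong_induction_on with
      | _ d IH =>
        intro q hsum hle hno hre
        by_cases hq : ∀ i, q i = Nat.nth (p i) c
        · have heq : (fun i => t i (q i)) = fun i => t i (Nat.nth (p i) c) :=
            funext fun i => by rw [hq i]
          rwa [heq] at hre
        · push_neg at hq
          obtain ⟨M, hM⟩ := (hArb _ hre).1
          have hvalid := (hArb _ hre).2 M hM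
          have hMlt : ∀ i ∈ M.val, q i < Nat.nth (p i) c := by
            intro i hi
            rcases hvalid with hnoobs | ⟨huniv, hall⟩
            · rcases lt_or_eq_of_le (hle i) with h | h
              · exact h
              · exfalso
                apply hnoobs i hi
                show ξ i (t i (q i))
                rw [h]
                exact hmem i c hc
            · obtain ⟨i0, hi0⟩ := hq
              have hlt0 : q i0 < Nat.nth (p i0) c := lt_of_le_of_ne (hle i0) hi0
              exact absurd (hall i0) (hno i0 (q i0) le_rfl hlt0)
          set q' : Fin k → ℕ := fun i => if i ∈ M.val then q i + 1 else q i with hq'def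
          have hstep : CompTrans T Arb (fun i => t i (q i)) (fun i => t i (q' i)) := by
            refine ⟨M, hM, fun i => ((ht i).2 (q i)).choose, ?_, ?_⟩
            · intro i hi
              simp only [hq'def, if_pos hi]
              exact ((ht i).2 (q i)).choose_spec
            · intro i hi
              simp [hq'def, hi]
          have hre' : PsiReachable T ψ Arb (fun i => t i (q' i)) := by
            obtain ⟨s0, h1, h2, h3⟩ := hre
            exact ⟨s0, h1, h2, h3.tail hstep⟩
          refine IH (∑ i, (Nat.nth (p i) c - q' i)) ?_ q' rfl ?_ ?_ hre'
          · rw [← hsum]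
            obtain ⟨i0, hi0⟩ := M.property
            apply Finset.sum_lt_sum
            · intro i _
              by_cases hi : i ∈ M.val <;> simp only [hq'def, hi, if_true, if_false] <;> omega
            · refine ⟨i0, Finset.mem_univ i0, ?_⟩
              simp only [hq'def, if_pos hi0]
              exact Nat.sub_succ_lt_self _ _ (hMlt i0 hi0)
          · intro i
            by_cases hi : i ∈ M.val
            · simp only [hq'def, if_pos hi]
              exact hMlt i hi
            · simpa [hq'def, hi] using hle i
          · intro i n hn1 hn2
            apply hno i n ?_ hn2
            by_cases hi : i ∈ M.val
            · simp only [hq'def, if_pos hi] at hn1; omega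
            · simpa [hq'def, hi] using hn1
    have reach : ∀ c, c ≤ j → PsiReachable T ψ Arb (fun i => t i (Nat.nth (p i) c)) := by
      intro c
      induction c with
      | zero =>
        intro _
        apply claimA 0 (Nat.zero_le j) _ (fun _ => 0) rfl (fun i => Nat.zero_le _) ?_ ?_
        · intro i n _ hn
          have hz : Nat.nth (p i) 0 = sInf (setOf (p i)) := Nat.nth_zero
          exact Nat.notMem_of_lt_sInf (hz ▸ hn)
        · have heq : (fun i => t i 0) = sb0 := funext fun i => (ht i).1
          exact ⟨sb0, hinit, hpsi, heq ▸ Relation.ReflTransGen.refl⟩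
      | succ c ihc =>
        intro hcj
        have hc : c ≤ j := Nat.le_of_succ_le hcj
        have hre := ihc hc
        obtain ⟨M, hM⟩ := (hArb _ hre).1
        have hvalid := (hArb _ hre).2 M hM
        have hiM : ∀ i : Fin k, i ∈ M.val := by
          rcases hvalid with hnoobs | ⟨hu, _⟩
          · obtain ⟨i0, hi0⟩ := M.property
            exact absurd (hmem i0 c hc) (hnoobs i0 hi0)
          · intro i; exact hu ▸ Set.mem_univ i
        have hstep : CompTrans T Arb (fun i => t i (Nat.nth (p i) c))
            (fun i => t i (Nat.nth (p i) c + 1)) := by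
          refine ⟨M, hM, fun i => ((ht i).2 (Nat.nth (p i) c)).choose, ?_, ?_⟩
          · intro i _
            exact ((ht i).2 (Nat.nth (p i) c)).choose_spec
          · intro i hi
            exact absurd (hiM i) hi
        have hre' : PsiReachable T ψ Arb (fun i => t i (Nat.nth (p i) c + 1)) := by
          obtain ⟨s0, h1, h2, h3⟩ := hre
          exact ⟨s0, h1, h2, h3.tail hstep⟩
        apply claimA (c + 1) hcj _ (fun i => Nat.nth (p i) c + 1) rfl ?_ ?_ hre'
        · intro i
          exact Nat.succ_le_of_lt (Nat.nth_lt_nth' (Nat.lt_succ_self c)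
            (fun hf => hcard i (c + 1) hcj hf))
        · intro i n hn1 hn2 hpn
          have hn1' : Nat.nth (p i) c + 1 ≤ n := hn1
          exact absurd (Nat.le_nth_of_lt_nth_succ hn2 hpn) (by omega)
    by_contra hφ
    exact hsafe _ (reach j le_rfl) ⟨fun i => hmem i j le_rfl, hφ⟩
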